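/- Let N ≥ 1 be an integer, let t, r > 1 and 0 < λ < N be real numbers with 1/t + λ/N + 1/r = 2. Then there exists a constant C = C(t, N, λ, r) > 0 such that for every f ∈ L^t(ℝ^N) and every h ∈ L^r(ℝ^N), the double integral satisfies |∫_{ℝ^N} ∫_{ℝ^N} f(x) h(y) / |x − y|^λ dx dy| ≤ C ‖f‖_{L^t(ℝ^N)} ‖h‖_{L^r(ℝ^N)}. -/

import Mathlib

open MeasureTheory Set Metric
open scoped ENNReal NNReal

namespace HLSAux

variable {α : Type*} [MeasurableSpace α]

/-- The layercake representation of an `ℝ≥0∞` constant. -/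
lemma layer_const (c : ℝ≥0∞) :
    ∫⁻ a in Ioi (0:ℝ), {a : ℝ | ENNReal.ofReal a < c}.indicator (fun _ => (1:ℝ≥0∞)) a = c := by
  have hmeas : MeasurableSet {a : ℝ | ENNReal.ofReal a < c} :=
    measurableSet_lt (by fun_prop) measurable_const
  rw [lintegral_indicator hmeas, setLIntegral_one, Measure.restrict_apply hmeas]
  rcases eq_or_ne c ⊤ with rfl | hc
  · have : {a : ℝ | ENNReal.ofReal a < ⊤} = univ := by
      ext a; simp [ENNReal.ofReal_lt_top]
    rw [this, univ_inter, Real.volume_Ioi]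
  · have : {a : ℝ | ENNReal.ofReal a < c} ∩ Ioi 0 = Ioo 0 c.toReal := by
      ext a
      simp only [mem_inter_iff, mem_setOf_eq, mem_Ioi, mem_Ioo]
      constructor
      · rintro ⟨h1, h2⟩
        exact ⟨h2, (ENNReal.ofReal_lt_iff_lt_toReal h2.le hc).mp h1⟩
      · rintro ⟨h1, h2⟩
        exact ⟨(ENNReal.ofReal_lt_iff_lt_toReal h1.le hc).mpr h2, h1⟩
    rw [this, Real.volume_Ioo, sub_zero, ENNReal.ofReal_toReal hc]

/-- Weighted layer cake formula. -/
lemma layer_mul (μ : Measure α) [SFinite μ] (F : α → ℝ≥0∞) (Φ : α → ℝ≥0∞)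
    (hF : Measurable F) (hΦ : Measurable Φ) :
    ∫⁻ a in Ioi (0:ℝ), ∫⁻ x in {x | ENNReal.ofReal a < F x}, Φ x ∂μ
      = ∫⁻ x, F x * Φ x ∂μ := by
  have hT : MeasurableSet {p : ℝ × α | ENNReal.ofReal p.1 < F p.2} :=
    measurableSet_lt (by fun_prop) (hF.comp measurable_snd)
  have key : ∀ (a : ℝ) (x : α),
      ({x | ENNReal.ofReal a < F x}.indicator Φ) x
        = {p : ℝ × α | ENNReal.ofReal p.1 < F p.2}.indicator (fun _ => (1:ℝ≥0∞)) (a, x) * Φ x := by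
    intro a x
    by_cases h : ENNReal.ofReal a < F x <;> simp [Set.indicator_apply, h]
  calc ∫⁻ a in Ioi (0:ℝ), ∫⁻ x in {x | ENNReal.ofReal a < F x}, Φ x ∂μ
      = ∫⁻ a in Ioi (0:ℝ), ∫⁻ x,
          {p : ℝ × α | ENNReal.ofReal p.1 < F p.2}.indicator (fun _ => (1:ℝ≥0∞)) (a, x) * Φ x ∂μ := by
        refine lintegral_congr fun a => ?_
        rw [← lintegral_indicator (measurableSet_lt measurable_const hF)]
        exact lintegral_congr fun x => key a x
    _ = ∫⁻ x, ∫⁻ a,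
          {p : ℝ × α | ENNReal.ofReal p.1 < F p.2}.indicator (fun _ => (1:ℝ≥0∞)) (a, x) * Φ x ∂(volume.restrict (Ioi 0)) ∂μ := by
        refine (lintegral_lintegral_swap ?_).symm
        exact (((measurable_const.indicator hT).comp
          (measurable_snd.prodMk measurable_fst)).mul (hΦ.comp measurable_fst)).aemeasurable
    _ = ∫⁻ x, F x * Φ x ∂μ := by
        refine lintegral_congr fun x => ?_
        have : ∀ a : ℝ, {p : ℝ × α | ENNReal.ofReal p.1 < F p.2}.indicator (fun _ => (1:ℝ≥0∞)) (a, x)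
            = {a : ℝ | ENNReal.ofReal a < F x}.indicator (fun _ => (1:ℝ≥0∞)) a := by
          intro a; by_cases h : ENNReal.ofReal a < F x <;> simp [Set.indicator_apply, h]
        simp_rw [this]
        rw [lintegral_mul_const _ ((measurable_const.indicator
          (measurableSet_lt (by fun_prop) measurable_const)))]
        rw [layer_const (F x), mul_comm]

section P2
variable {α : Type*} [MeasurableSpace α]

/-- Chebyshev inequality in the needed form. -/
lemma cheb (μ : Measure α) (F : α → ℝ≥0∞) (hF : AEMeasurable F μ) {p a : ℝ}
    (hp : 0 < p) (ha : 0 < a) :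
    μ {x | ENNReal.ofReal a < F x} ≤ (ENNReal.ofReal a) ^ (-p) * ∫⁻ x, F x ^ p ∂μ := by
  set ε : ℝ≥0∞ := (ENNReal.ofReal a) ^ p with hε
  have hε0 : ε ≠ 0 := (ENNReal.rpow_pos (ENNReal.ofReal_pos.mpr ha) ENNReal.ofReal_ne_top).ne'
  have hεt : ε ≠ ⊤ := ENNReal.rpow_ne_top_of_nonneg hp.le ENNReal.ofReal_ne_top
  have hsub : {x | ENNReal.ofReal a < F x} ⊆ {x | ε ≤ F x ^ p} := by
    intro x hx
    exact ENNReal.rpow_le_rpow (le_of_lt hx) hp.le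
  have h1 : ε * μ {x | ENNReal.ofReal a < F x} ≤ ∫⁻ x, F x ^ p ∂μ := by
    refine le_trans ?_ (mul_meas_ge_le_lintegral₀ (hF.pow_const p) ε)
    exact mul_le_mul_right (measure_mono hsub) ε
  rw [ENNReal.rpow_neg, ← ENNReal.div_eq_inv_mul]
  rw [ENNReal.le_div_iff_mul_le (Or.inl hε0) (Or.inl hεt), mul_comm]
  exact h1

/-- Layer cake for the `p`-th power norm. -/
lemma norm_layer (μ : Measure α) (F : α → ℝ≥0) (hF : Measurable F) {p : ℝ} (hp : 1 ≤ p) :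
    ∫⁻ a in Set.Ioi (0:ℝ), μ {x | ENNReal.ofReal a < (F x : ℝ≥0∞)} * ENNReal.ofReal (a ^ (p - 1))
      ≤ ∫⁻ x, (F x : ℝ≥0∞) ^ p ∂μ := by
  have hp0 : 0 < p := lt_of_lt_of_le one_pos hp
  have key := lintegral_comp_eq_lintegral_meas_lt_mul μ (f := fun x => (F x : ℝ))
    (g := fun t => t ^ (p - 1))
    (Filter.Eventually.of_forall fun x => (F x).coe_nonneg)
    (by fun_prop)
    (fun t _ => intervalIntegral.intervalIntegrable_rpow' (by linarith))
    (by
      filter_upwards [self_mem_ae_restrict measurableSet_Ioi] with t ht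
      exact Real.rpow_nonneg (le_of_lt ht) _)
  have hsets : ∀ a ∈ Set.Ioi (0:ℝ),
      μ {x | ENNReal.ofReal a < (F x : ℝ≥0∞)} = μ {x | a < (F x : ℝ)} := by
    intro a ha
    congr 1
    ext x
    simp only [Set.mem_setOf_eq, ← ENNReal.ofReal_coe_nnreal]
    exact ENNReal.ofReal_lt_ofReal_iff_of_nonneg (le_of_lt ha)
  calc ∫⁻ a in Set.Ioi (0:ℝ),
        μ {x | ENNReal.ofReal a < (F x : ℝ≥0∞)} * ENNReal.ofReal (a ^ (p - 1))
      = ∫⁻ a in Set.Ioi (0:ℝ), μ {x | a < (F x : ℝ)} * ENNReal.ofReal (a ^ (p - 1)) := by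
        refine setLIntegral_congr_fun measurableSet_Ioi ?_
        exact fun a ha => by rw [hsets a ha]
    _ = ∫⁻ x, ENNReal.ofReal (∫ s in (0:ℝ)..(F x : ℝ), s ^ (p - 1)) ∂μ := key.symm
    _ ≤ ∫⁻ x, (F x : ℝ≥0∞) ^ p ∂μ := by
        refine lintegral_mono fun x => ?_
        rw [integral_rpow (Or.inl (by linarith))]
        rw [sub_add_cancel, Real.zero_rpow hp0.ne', sub_zero]
        calc ENNReal.ofReal ((F x : ℝ) ^ p / p)
            ≤ ENNReal.ofReal ((F x : ℝ) ^ p) := by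
              apply ENNReal.ofReal_le_ofReal
              apply div_le_self (Real.rpow_nonneg (F x).coe_nonneg _) hp
          _ = (F x : ℝ≥0∞) ^ p := by
              rw [← ENNReal.ofReal_coe_nnreal,
                ENNReal.ofReal_rpow_of_nonneg (F x).coe_nonneg hp0.le]
end P2

section P3

/-- Bound for the Riesz kernel integrated over a set: bathtub principle. -/
lemma kernel_bound {N : ℕ} (hN : 1 ≤ N) {lam : ℝ} (hlam0 : 0 < lam) (hlamN : lam < N)
    (x : EuclideanSpace ℝ (Fin N)) (S : Set (EuclideanSpace ℝ (Fin N))) :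
    ∫⁻ y in S, ENNReal.ofReal (‖x - y‖ ^ (-lam)) ≤
      (volume (ball (0 : EuclideanSpace ℝ (Fin N)) 1)) ^ (lam / N) *
        ENNReal.ofReal (N / (N - lam)) * (volume S) ^ (1 - lam / N) := by
  have hNR : (0:ℝ) < N := by exact_mod_cast Nat.lt_of_lt_of_le Nat.zero_lt_one hN
  have hNlam : (0:ℝ) < N - lam := by linarith
  set ω : ℝ≥0∞ := volume (ball (0 : EuclideanSpace ℝ (Fin N)) 1) with hω
  have hω0 : ω ≠ 0 := (measure_ball_pos _ _ one_pos).ne'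
  have hωt : ω ≠ ⊤ := measure_ball_lt_top.ne
  set q : ℝ := (N:ℝ) / lam with hq
  have hq1 : 1 < q := (one_lt_div hlam0).mpr hlamN
  set θ : ℝ := lam / N with hθ
  have hθ0 : 0 < θ := div_pos hlam0 hNR
  have hθ1 : θ < 1 := (div_lt_one hNR).mpr hlamN
  -- Step 1: layer cake
  have step1 : ∫⁻ y in S, ENNReal.ofReal (‖x - y‖ ^ (-lam))
      = ∫⁻ a in Set.Ioi (0:ℝ), (volume.restrict S) {y | a < ‖x - y‖ ^ (-lam)} :=
    lintegral_eq_lintegral_meas_lt _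
      (Filter.Eventually.of_forall fun y => Real.rpow_nonneg (norm_nonneg _) _)
      (Measurable.aemeasurable (by fun_prop))
  -- Step 2: pointwise bound on superlevel measures
  have step2 : ∀ a ∈ Set.Ioi (0:ℝ), (volume.restrict S) {y | a < ‖x - y‖ ^ (-lam)}
      ≤ min (volume S) (ω * ENNReal.ofReal (a ^ (-q))) := by
    intro a ha
    rw [Set.mem_Ioi] at ha
    refine le_min ?_ ?_
    · calc (volume.restrict S) {y | a < ‖x - y‖ ^ (-lam)}
          ≤ (volume.restrict S) Set.univ := measure_mono (Set.subset_univ _)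
        _ = volume S := by rw [Measure.restrict_apply_univ]
    · set ρ : ℝ := a ^ (-(1/lam)) with hρ
      have hρ0 : 0 < ρ := Real.rpow_pos_of_pos ha _
      have hsub : {y | a < ‖x - y‖ ^ (-lam)} ⊆ ball x ρ := by
        intro y hy
        rw [Set.mem_setOf_eq] at hy
        rw [mem_ball, dist_comm, dist_eq_norm]
        rcases eq_or_lt_of_le (norm_nonneg (x - y)) with h0 | h0
        · rw [← h0]; exact hρ0
        · have h2 : (‖x - y‖ ^ (-lam)) ^ (-(1/lam)) < a ^ (-(1/lam)) :=
            Real.rpow_lt_rpow_of_neg ha hy (neg_lt_zero.mpr (by positivity))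
          calc ‖x - y‖ = (‖x - y‖ ^ (-lam)) ^ (-(1/lam)) := by
                rw [← Real.rpow_mul (norm_nonneg _)]
                rw [show -lam * -(1/lam) = 1 by field_simp, Real.rpow_one]
            _ < ρ := h2
      calc (volume.restrict S) {y | a < ‖x - y‖ ^ (-lam)}
          ≤ volume {y | a < ‖x - y‖ ^ (-lam)} := Measure.restrict_le_self _
        _ ≤ volume (ball x ρ) := measure_mono hsub
        _ = ENNReal.ofReal (ρ ^ (N:ℕ)) * ω := by
            rw [Measure.addHaar_ball_of_pos volume x hρ0, finrank_euclideanSpace_fin]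
        _ = ω * ENNReal.ofReal (a ^ (-q)) := by
            rw [mul_comm]
            congr 2
            rw [← Real.rpow_natCast ρ N, hρ, ← Real.rpow_mul ha.le]
            congr 1
            rw [hq]
            field_simp
  rw [step1]
  -- handle degenerate sizes of S
  rcases eq_or_ne (volume S) 0 with hV0 | hV0
  · calc ∫⁻ a in Set.Ioi (0:ℝ), (volume.restrict S) {y | a < ‖x - y‖ ^ (-lam)}
        ≤ ∫⁻ _ in Set.Ioi (0:ℝ), 0 := by
          refine setLIntegral_mono' measurableSet_Ioi fun a ha => ?_
          exact le_trans (step2 a ha) (le_trans (min_le_left _ _) (le_of_eq hV0))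
      _ = 0 := by simp
      _ ≤ _ := zero_le
  rcases eq_or_ne (volume S) ⊤ with hVt | hVt
  · refine le_trans le_top (le_of_eq ?_)
    rw [hVt, ENNReal.top_rpow_of_pos (by linarith), ENNReal.mul_top]
    refine mul_ne_zero ?_ ?_
    · exact (ENNReal.rpow_pos (hω0.bot_lt) hωt).ne'
    · simp only [ne_eq, ENNReal.ofReal_eq_zero, not_le]
      exact div_pos hNR hNlam
  -- main case
  set v : ℝ := (volume S).toReal with hv
  have hvpos : 0 < v := ENNReal.toReal_pos hV0 hVt
  set w0 : ℝ := ω.toReal with hw0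
  have hw0pos : 0 < w0 := ENNReal.toReal_pos hω0 hωt
  set t0 : ℝ := (w0 / v) ^ θ with ht0
  have ht0pos : 0 < t0 := Real.rpow_pos_of_pos (by positivity) _
  have hsplit : Set.Ioi (0:ℝ) = Set.Ioc 0 t0 ∪ Set.Ioi t0 := (Set.Ioc_union_Ioi_eq_Ioi ht0pos.le).symm
  calc ∫⁻ a in Set.Ioi (0:ℝ), (volume.restrict S) {y | a < ‖x - y‖ ^ (-lam)}
      ≤ ∫⁻ a in Set.Ioi (0:ℝ), min (volume S) (ω * ENNReal.ofReal (a ^ (-q))) :=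
        setLIntegral_mono' measurableSet_Ioi step2
    _ = (∫⁻ a in Set.Ioc (0:ℝ) t0, min (volume S) (ω * ENNReal.ofReal (a ^ (-q))))
        + ∫⁻ a in Set.Ioi t0, min (volume S) (ω * ENNReal.ofReal (a ^ (-q))) := by
        rw [hsplit, lintegral_union measurableSet_Ioi (Set.Ioc_disjoint_Ioi le_rfl)]
    _ ≤ (∫⁻ _ in Set.Ioc (0:ℝ) t0, volume S)
        + ∫⁻ a in Set.Ioi t0, ω * ENNReal.ofReal (a ^ (-q)) := by
        gcongr
        · exact min_le_left _ _
        · exact min_le_right _ _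
    _ ≤ ENNReal.ofReal (v * t0) + ENNReal.ofReal (w0 * (t0 ^ (1 - q) / (q - 1))) := by
        gcongr
        · rw [setLIntegral_const, Real.volume_Ioc, sub_zero, ENNReal.ofReal_mul hvpos.le]
          rw [← ENNReal.ofReal_toReal hVt, ← hv]
        · rw [lintegral_const_mul' _ _ hωt]
          have hint : ∫ a in Set.Ioi t0, a ^ (-q) = t0 ^ (1 - q) / (q - 1) := by
            rw [integral_Ioi_rpow_of_lt (by linarith) ht0pos]
            rw [show -q + 1 = 1 - q by ring, show (1:ℝ) - q = -(q-1) by ring]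
            rw [div_neg, neg_div, neg_neg]
          rw [ENNReal.ofReal_mul hw0pos.le, ← hint]
          rw [← ofReal_integral_eq_lintegral_ofReal
            (integrableOn_Ioi_rpow_of_lt (by linarith) ht0pos)
            ?_]
          · rw [← ENNReal.ofReal_toReal hωt, ← hw0]
          · filter_upwards [self_mem_ae_restrict measurableSet_Ioi] with a ha
            exact Real.rpow_nonneg (ht0pos.trans ha).le _
    _ ≤ ω ^ (lam / (N:ℝ)) * ENNReal.ofReal (↑N / (↑N - lam)) * volume S ^ (1 - lam / ↑N) := by
        have hωr : ω = ENNReal.ofReal w0 := (ENNReal.ofReal_toReal hωt).symm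
        have hVr : volume S = ENNReal.ofReal v := (ENNReal.ofReal_toReal hVt).symm
        rw [hωr, hVr, ENNReal.ofReal_rpow_of_pos hw0pos, ENNReal.ofReal_rpow_of_pos hvpos,
          ← ENNReal.ofReal_mul (by positivity),
          ← ENNReal.ofReal_mul (mul_nonneg (by positivity) (div_pos hNR hNlam).le),
          ← ENNReal.ofReal_add (by positivity) (mul_nonneg hw0pos.le
            (div_nonneg (Real.rpow_nonneg ht0pos.le _) (by linarith)))]
        refine ENNReal.ofReal_le_ofReal (le_of_eq ?_)
        have hvθ : v ^ (1-θ) = v / v^θ := by rw [Real.rpow_sub hvpos, Real.rpow_one]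
        have h1 : v * t0 = w0^θ * v^(1-θ) := by
          rw [ht0, Real.div_rpow hw0pos.le hvpos.le, hvθ]; ring
        have hθq : θ * (1 - q) = θ - 1 := by rw [hθ, hq]; field_simp
        have h2 : w0 * (t0^(1-q)) = w0^θ * v^(1-θ) := by
          rw [ht0, ← Real.rpow_mul (by positivity), hθq,
            Real.div_rpow hw0pos.le hvpos.le, Real.rpow_sub hw0pos, Real.rpow_sub hvpos,
            Real.rpow_one, Real.rpow_one, hvθ]
          have hv0' : v ^ θ ≠ 0 := (Real.rpow_pos_of_pos hvpos θ).ne'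
          field_simp
        have h3 : (1:ℝ)/(q-1) = lam/((N:ℝ)-lam) := by
          rw [hq]; rw [div_eq_div_iff (by rw [hq] at hq1; linarith) (by linarith)]
          field_simp
        have h4 : 1 + lam/((N:ℝ)-lam) = (N:ℝ)/((N:ℝ)-lam) := by field_simp; ring
        calc v * t0 + w0 * (t0^(1-q)/(q-1))
            = w0^θ*v^(1-θ) + (w0 * t0^(1-q)) * (1/(q-1)) := by rw [h1]; ring
          _ = w0^θ*v^(1-θ) + (w0^θ*v^(1-θ)) * (lam/((N:ℝ)-lam)) := by rw [h2, h3]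
          _ = w0^θ*v^(1-θ) * ((N:ℝ)/((N:ℝ)-lam)) := by rw [← h4]; ring
          _ = w0^θ * ((N:ℝ)/((N:ℝ)-lam)) * v^(1-θ) := by ring
          _ = w0 ^ (lam/(N:ℝ)) * ((N:ℝ)/((N:ℝ)-lam)) * v ^ (1 - lam/(N:ℝ)) := by rw [hθ]

end P3

section P5a

lemma lint_Ioc_rpow {s c : ℝ} (hs0 : 0 < s) (hs1 : s < 1) (hc : 0 < c) :
    ∫⁻ a in Set.Ioc (0:ℝ) c, ENNReal.ofReal (a ^ (-s))
      = ENNReal.ofReal (c ^ (1-s) / (1-s)) := by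
  have hint : IntegrableOn (fun a : ℝ => a ^ (-s)) (Set.Ioc 0 c) :=
    (intervalIntegral.intervalIntegrable_rpow' (by linarith)).1
  rw [← ofReal_integral_eq_lintegral_ofReal hint ?_]
  · congr 1
    rw [← intervalIntegral.integral_of_le hc.le, integral_rpow (Or.inl (by linarith))]
    rw [Real.zero_rpow (by linarith : -s + 1 ≠ 0), sub_zero,
      show -s + 1 = 1 - s by ring]
  · filter_upwards [self_mem_ae_restrict measurableSet_Ioc] with a ha
    exact Real.rpow_nonneg ha.1.le _

end P5a

section P4

variable {N : ℕ} {t r lam : ℝ}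

/-- Normalized Hardy-Littlewood-Sobolev for nonnegative measurable functions. -/
lemma core_norm (hN : 1 ≤ N) (ht : 1 < t) (hr : 1 < r) (hlam0 : 0 < lam) (hlamN : lam < N)
    (hsum : 1 / t + lam / N + 1 / r = 2)
    (F H : EuclideanSpace ℝ (Fin N) → ℝ≥0) (hF : Measurable F) (hH : Measurable H)
    (hA : ∫⁻ x, (F x : ℝ≥0∞) ^ t = 1) (hB : ∫⁻ y, (H y : ℝ≥0∞) ^ r = 1) :
    ∫⁻ x, ∫⁻ y, (F x : ℝ≥0∞) * ENNReal.ofReal (‖x - y‖ ^ (-lam)) * (H y : ℝ≥0∞)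
      ≤ (volume (ball (0 : EuclideanSpace ℝ (Fin N)) 1) ^ (lam / N) *
          ENNReal.ofReal ((N:ℝ) / ((N:ℝ) - lam))) *
        (ENNReal.ofReal (1 / (1 - t * (1 - lam / N))) +
          ENNReal.ofReal (1 / (1 - r * (1 - lam / N)))) := by
  have hNR : (0:ℝ) < N := by exact_mod_cast Nat.lt_of_lt_of_le Nat.zero_lt_one hN
  have ht0 : (0:ℝ) < t := by linarith
  have hr0 : (0:ℝ) < r := by linarith
  set θ : ℝ := lam / N with hθ
  have hθ0 : 0 < θ := div_pos hlam0 hNR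
  have hθ1 : θ < 1 := (div_lt_one hNR).mpr hlamN
  set s1 : ℝ := t * (1 - θ) with hs1
  set s2 : ℝ := r * (1 - θ) with hs2
  have hrinv : 1 / r < 1 := by rw [div_lt_one hr0]; linarith
  have htinv : 1 / t < 1 := by rw [div_lt_one ht0]; linarith
  have hs1eq : 1 - s1 = t * (1 - 1/r) := by
    have hLv : θ = 2 - 1/t - 1/r := by rw [hθ]; linarith
    rw [hs1, hLv]; field_simp; ring
  have hs2eq : 1 - s2 = r * (1 - 1/t) := by
    have hLv : θ = 2 - 1/t - 1/r := by rw [hθ]; linarith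
    rw [hs2, hLv]; field_simp; ring
  have hs1pos : 0 < 1 - s1 := by rw [hs1eq]; exact mul_pos ht0 (by linarith)
  have hs2pos : 0 < 1 - s2 := by rw [hs2eq]; exact mul_pos hr0 (by linarith)
  have hs1pos' : 0 < s1 := by rw [hs1]; exact mul_pos ht0 (by linarith)
  have hs2pos' : 0 < s2 := by rw [hs2]; exact mul_pos hr0 (by linarith)
  have he1 : (r / t) * (1 - s1) = r - 1 := by
    rw [hs1eq]; field_simp
  have he2 : (t / r) * (1 - s2) = t - 1 := by
    rw [hs2eq]; field_simp
  set Ck : ℝ≥0∞ := volume (ball (0 : EuclideanSpace ℝ (Fin N)) 1) ^ (lam / N) *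
      ENNReal.ofReal ((N:ℝ) / ((N:ℝ) - lam)) with hCk
  have hCkt : Ck ≠ ⊤ := by
    rw [hCk]
    exact ENNReal.mul_ne_top
      (ENNReal.rpow_ne_top_of_nonneg hθ0.le measure_ball_lt_top.ne) ENNReal.ofReal_ne_top
  set K : EuclideanSpace ℝ (Fin N) → ℝ≥0∞ := fun z => ENNReal.ofReal (‖z‖ ^ (-lam)) with hK
  have hKm : Measurable K := by rw [hK]; fun_prop
  set u : ℝ → ℝ≥0∞ := fun a => volume {x | ENNReal.ofReal a < (F x : ℝ≥0∞)} with hu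
  set w : ℝ → ℝ≥0∞ := fun b => volume {y | ENNReal.ofReal b < (H y : ℝ≥0∞)} with hw
  have hum : Measurable u := by
    refine Antitone.measurable fun a1 a2 h12 => ?_
    exact measure_mono fun x hx => lt_of_le_of_lt (ENNReal.ofReal_le_ofReal h12) hx
  have hwm : Measurable w := by
    refine Antitone.measurable fun a1 a2 h12 => ?_
    exact measure_mono fun x hx => lt_of_le_of_lt (ENNReal.ofReal_le_ofReal h12) hx
  -- the inner kernel integral, uncurried
  set W : (EuclideanSpace ℝ (Fin N) × ℝ) × EuclideanSpace ℝ (Fin N) → ℝ≥0∞ :=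
    fun q => if ENNReal.ofReal q.1.2 < (H q.2 : ℝ≥0∞) then K (q.1.1 - q.2) else 0 with hW
  have hWm : Measurable W := by
    refine Measurable.ite ?_ (by fun_prop) measurable_const
    exact measurableSet_lt (by fun_prop) (by fun_prop)
  set Φ : EuclideanSpace ℝ (Fin N) × ℝ → ℝ≥0∞ :=
    fun p => ∫⁻ y, W (p, y) with hΦ
  have hΦm : Measurable Φ := hWm.lintegral_prod_right'
  have hΦeq : ∀ x b, Φ (x, b) = ∫⁻ y in {y | ENNReal.ofReal b < (H y : ℝ≥0∞)}, K (x - y) := by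
    intro x b
    rw [hΦ]
    rw [← lintegral_indicator (measurableSet_lt measurable_const (by fun_prop))]
    refine lintegral_congr fun y => ?_
    rw [Set.indicator_apply]
    simp only [Set.mem_setOf_eq, hW]
  -- bound on Φ via the kernel estimate
  have hΦle : ∀ x b, Φ (x, b) ≤ Ck * w b ^ (1 - θ) := by
    intro x b
    rw [hΦeq, hCk]
    exact kernel_bound hN hlam0 hlamN x _
  -- step 1 : layer H inside
  have step1 : ∀ x, (∫⁻ y, (F x : ℝ≥0∞) * K (x - y) * (H y : ℝ≥0∞))
      = ∫⁻ b in Set.Ioi (0:ℝ), (F x : ℝ≥0∞) * Φ (x, b) := by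
    intro x
    have := HLSAux.layer_mul volume (fun y => (H y : ℝ≥0∞))
      (fun y => (F x : ℝ≥0∞) * K (x - y)) (by fun_prop) (by fun_prop)
    calc ∫⁻ y, (F x : ℝ≥0∞) * K (x - y) * (H y : ℝ≥0∞)
        = ∫⁻ y, (H y : ℝ≥0∞) * ((F x : ℝ≥0∞) * K (x - y)) := by
          refine lintegral_congr fun y => by ring
      _ = ∫⁻ b in Set.Ioi (0:ℝ), ∫⁻ y in {y | ENNReal.ofReal b < (H y : ℝ≥0∞)},
            (F x : ℝ≥0∞) * K (x - y) := this.symm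
      _ = ∫⁻ b in Set.Ioi (0:ℝ), (F x : ℝ≥0∞) * Φ (x, b) := by
          refine lintegral_congr fun b => ?_
          rw [hΦeq, lintegral_const_mul _ (by fun_prop)]
  -- step 2 : swap x and b, then layer F
  have step2 : ∫⁻ x, ∫⁻ y, (F x : ℝ≥0∞) * K (x - y) * (H y : ℝ≥0∞)
      = ∫⁻ b in Set.Ioi (0:ℝ), ∫⁻ a in Set.Ioi (0:ℝ),
          ∫⁻ x in {x | ENNReal.ofReal a < (F x : ℝ≥0∞)}, Φ (x, b) := by
    calc ∫⁻ x, ∫⁻ y, (F x : ℝ≥0∞) * K (x - y) * (H y : ℝ≥0∞)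
        = ∫⁻ x, ∫⁻ b in Set.Ioi (0:ℝ), (F x : ℝ≥0∞) * Φ (x, b) :=
          lintegral_congr fun x => step1 x
      _ = ∫⁻ b in Set.Ioi (0:ℝ), ∫⁻ x, (F x : ℝ≥0∞) * Φ (x, b) := by
          refine lintegral_lintegral_swap ?_
          exact (((measurable_coe_nnreal_ennreal.comp hF).comp measurable_fst).mul hΦm).aemeasurable
      _ = _ := by
          refine lintegral_congr fun b => ?_
          exact (HLSAux.layer_mul volume (fun x => (F x : ℝ≥0∞))
            (fun x => Φ (x, b)) (by fun_prop)
            (hΦm.comp (measurable_id.prodMk measurable_const))).symm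
  -- the two bounds on T a b
  have boundα : ∀ a b : ℝ, (∫⁻ x in {x | ENNReal.ofReal a < (F x : ℝ≥0∞)}, Φ (x, b))
      ≤ Ck * (u a * w b ^ (1 - θ)) := by
    intro a b
    calc (∫⁻ x in {x | ENNReal.ofReal a < (F x : ℝ≥0∞)}, Φ (x, b))
        ≤ ∫⁻ _ in {x | ENNReal.ofReal a < (F x : ℝ≥0∞)}, Ck * w b ^ (1 - θ) :=
          setLIntegral_mono' (measurableSet_lt measurable_const (by fun_prop))
            (fun x _ => hΦle x b)
      _ = Ck * w b ^ (1 - θ) * u a := by rw [setLIntegral_const]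
      _ = Ck * (u a * w b ^ (1 - θ)) := by ring
  have boundβ : ∀ a b : ℝ, (∫⁻ x in {x | ENNReal.ofReal a < (F x : ℝ≥0∞)}, Φ (x, b))
      ≤ Ck * (w b * u a ^ (1 - θ)) := by
    intro a b
    have hswap : (∫⁻ x in {x | ENNReal.ofReal a < (F x : ℝ≥0∞)}, Φ (x, b))
        = ∫⁻ y in {y | ENNReal.ofReal b < (H y : ℝ≥0∞)},
            ∫⁻ x in {x | ENNReal.ofReal a < (F x : ℝ≥0∞)}, K (x - y) := by
      calc (∫⁻ x in {x | ENNReal.ofReal a < (F x : ℝ≥0∞)}, Φ (x, b))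
          = ∫⁻ x in {x | ENNReal.ofReal a < (F x : ℝ≥0∞)},
              ∫⁻ y in {y | ENNReal.ofReal b < (H y : ℝ≥0∞)}, K (x - y) := by
            refine lintegral_congr fun x => hΦeq x b
        _ = _ := by
            refine lintegral_lintegral_swap ?_
            exact (hKm.comp ((measurable_fst.sub measurable_snd))).aemeasurable
    rw [hswap]
    calc (∫⁻ y in {y | ENNReal.ofReal b < (H y : ℝ≥0∞)},
            ∫⁻ x in {x | ENNReal.ofReal a < (F x : ℝ≥0∞)}, K (x - y))
        ≤ ∫⁻ _ in {y | ENNReal.ofReal b < (H y : ℝ≥0∞)}, Ck * u a ^ (1 - θ) := by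
          refine setLIntegral_mono' (measurableSet_lt measurable_const (by fun_prop))
            (fun y _ => ?_)
          have : (∫⁻ x in {x | ENNReal.ofReal a < (F x : ℝ≥0∞)}, K (x - y))
              = ∫⁻ x in {x | ENNReal.ofReal a < (F x : ℝ≥0∞)},
                  ENNReal.ofReal (‖y - x‖ ^ (-lam)) := by
            refine lintegral_congr fun x => by rw [hK, norm_sub_rev]
          rw [this, hCk]
          exact kernel_bound hN hlam0 hlamN y _
      _ = Ck * u a ^ (1 - θ) * w b := by rw [setLIntegral_const]
      _ = Ck * (w b * u a ^ (1 - θ)) := by ring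
  -- Chebyshev
  have hcheb_u : ∀ a : ℝ, 0 < a → u a ^ (1 - θ) ≤ ENNReal.ofReal (a ^ (-s1)) := by
    intro a ha
    have h1 : u a ≤ ENNReal.ofReal a ^ (-t) := by
      have := cheb volume (fun x => (F x : ℝ≥0∞)) (by fun_prop) ht0 ha
      rwa [hA, mul_one] at this
    calc u a ^ (1 - θ) ≤ (ENNReal.ofReal a ^ (-t)) ^ (1 - θ) :=
          ENNReal.rpow_le_rpow h1 (by linarith)
      _ = ENNReal.ofReal a ^ (-s1) := by
          rw [← ENNReal.rpow_mul]
          congr 1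
          rw [hs1]; ring
      _ = ENNReal.ofReal (a ^ (-s1)) := ENNReal.ofReal_rpow_of_pos ha
  have hcheb_w : ∀ b : ℝ, 0 < b → w b ^ (1 - θ) ≤ ENNReal.ofReal (b ^ (-s2)) := by
    intro b hb
    have h1 : w b ≤ ENNReal.ofReal b ^ (-r) := by
      have := cheb volume (fun y => (H y : ℝ≥0∞)) (by fun_prop) hr0 hb
      rwa [hB, mul_one] at this
    calc w b ^ (1 - θ) ≤ (ENNReal.ofReal b ^ (-r)) ^ (1 - θ) :=
          ENNReal.rpow_le_rpow h1 (by linarith)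
      _ = ENNReal.ofReal b ^ (-s2) := by
          rw [← ENNReal.rpow_mul]
          congr 1
          rw [hs2]; ring
      _ = ENNReal.ofReal (b ^ (-s2)) := ENNReal.ofReal_rpow_of_pos hb
  -- region-split majorants
  set Xf : ℝ → ℝ → ℝ≥0∞ := fun b a =>
    if a ^ t ≤ b ^ r then Ck * (w b * ENNReal.ofReal (a ^ (-s1))) else 0 with hXf
  set Yf : ℝ → ℝ → ℝ≥0∞ := fun b a =>
    if a ^ t ≤ b ^ r then 0 else Ck * (u a * ENNReal.ofReal (b ^ (-s2))) with hYf
  have hXm : Measurable (fun p : ℝ × ℝ => Xf p.1 p.2) := by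
    refine Measurable.ite (measurableSet_le (by fun_prop) (by fun_prop)) ?_ measurable_const
    exact measurable_const.mul ((hwm.comp measurable_fst).mul (by fun_prop))
  have hYm : Measurable (fun p : ℝ × ℝ => Yf p.1 p.2) := by
    refine Measurable.ite (measurableSet_le (by fun_prop) (by fun_prop)) measurable_const ?_
    exact measurable_const.mul ((hum.comp measurable_snd).mul (by fun_prop))
  have hT_le : ∀ b ∈ Set.Ioi (0:ℝ), ∀ a ∈ Set.Ioi (0:ℝ),
      (∫⁻ x in {x | ENNReal.ofReal a < (F x : ℝ≥0∞)}, Φ (x, b)) ≤ Xf b a + Yf b a := by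
    intro b hb a ha
    rw [Set.mem_Ioi] at hb ha
    by_cases hc : a ^ t ≤ b ^ r
    · rw [hXf, hYf]
      simp only [if_pos hc, add_zero]
      calc (∫⁻ x in {x | ENNReal.ofReal a < (F x : ℝ≥0∞)}, Φ (x, b))
          ≤ Ck * (w b * u a ^ (1 - θ)) := boundβ a b
        _ ≤ Ck * (w b * ENNReal.ofReal (a ^ (-s1))) :=
            mul_le_mul_right (mul_le_mul_right (hcheb_u a ha) (w b)) Ck
    · rw [hXf, hYf]
      simp only [if_neg hc, zero_add]
      calc (∫⁻ x in {x | ENNReal.ofReal a < (F x : ℝ≥0∞)}, Φ (x, b))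
          ≤ Ck * (u a * w b ^ (1 - θ)) := boundα a b
        _ ≤ Ck * (u a * ENNReal.ofReal (b ^ (-s2))) :=
            mul_le_mul_right (mul_le_mul_right (hcheb_w b hb) (u a)) Ck
  -- first region
  have hP1 : (∫⁻ b in Set.Ioi (0:ℝ), ∫⁻ a in Set.Ioi (0:ℝ), Xf b a)
      ≤ Ck * ENNReal.ofReal (1 / (1 - s1)) := by
    have inner : ∀ b ∈ Set.Ioi (0:ℝ), (∫⁻ a in Set.Ioi (0:ℝ), Xf b a)
        ≤ Ck * ENNReal.ofReal (1 / (1 - s1)) * (w b * ENNReal.ofReal (b ^ (r - 1))) := by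
      intro b hb
      rw [Set.mem_Ioi] at hb
      have hpt : ∀ a ∈ Set.Ioi (0:ℝ), Xf b a ≤
          (Set.Ioc (0:ℝ) (b ^ (r/t))).indicator
            (fun a => (Ck * w b) * ENNReal.ofReal (a ^ (-s1))) a := by
        intro a ha
        rw [Set.mem_Ioi] at ha
        simp only [hXf]
        by_cases hc : a ^ t ≤ b ^ r
        · have hmem : a ∈ Set.Ioc (0:ℝ) (b ^ (r/t)) := by
            refine ⟨ha, ?_⟩
            have h2 : (a ^ t) ^ (1/t) ≤ (b ^ r) ^ (1/t) :=
              Real.rpow_le_rpow (Real.rpow_nonneg ha.le _) hc (by positivity)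
            rwa [← Real.rpow_mul ha.le, ← Real.rpow_mul hb.le, mul_one_div,
              div_self ht0.ne', Real.rpow_one, mul_one_div] at h2
          rw [if_pos hc, Set.indicator_of_mem hmem]
          exact le_of_eq (mul_assoc _ _ _).symm
        · rw [if_neg hc]; exact zero_le
      calc (∫⁻ a in Set.Ioi (0:ℝ), Xf b a)
          ≤ ∫⁻ a in Set.Ioi (0:ℝ), (Set.Ioc (0:ℝ) (b ^ (r/t))).indicator
              (fun a => (Ck * w b) * ENNReal.ofReal (a ^ (-s1))) a :=
            setLIntegral_mono' measurableSet_Ioi hpt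
        _ = ∫⁻ a in Set.Ioc (0:ℝ) (b ^ (r/t)), (Ck * w b) * ENNReal.ofReal (a ^ (-s1)) := by
            rw [lintegral_indicator measurableSet_Ioc,
              Measure.restrict_restrict measurableSet_Ioc,
              Set.inter_eq_left.mpr (fun a ha => ha.1)]
        _ = (Ck * w b) * ∫⁻ a in Set.Ioc (0:ℝ) (b ^ (r/t)), ENNReal.ofReal (a ^ (-s1)) :=
            lintegral_const_mul _ (by fun_prop)
        _ = (Ck * w b) * ENNReal.ofReal ((b ^ (r/t)) ^ (1 - s1) / (1 - s1)) := by
            rw [lint_Ioc_rpow hs1pos' (by linarith) (Real.rpow_pos_of_pos hb _)]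
        _ = Ck * ENNReal.ofReal (1 / (1 - s1)) * (w b * ENNReal.ofReal (b ^ (r - 1))) := by
            rw [← Real.rpow_mul hb.le, he1, div_eq_mul_one_div,
              ENNReal.ofReal_mul (Real.rpow_nonneg hb.le _)]
            ring
    calc (∫⁻ b in Set.Ioi (0:ℝ), ∫⁻ a in Set.Ioi (0:ℝ), Xf b a)
        ≤ ∫⁻ b in Set.Ioi (0:ℝ),
            Ck * ENNReal.ofReal (1 / (1 - s1)) * (w b * ENNReal.ofReal (b ^ (r - 1))) :=
          setLIntegral_mono' measurableSet_Ioi inner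
      _ = Ck * ENNReal.ofReal (1 / (1 - s1)) *
            ∫⁻ b in Set.Ioi (0:ℝ), w b * ENNReal.ofReal (b ^ (r - 1)) :=
          lintegral_const_mul _ (hwm.mul (by fun_prop))
      _ ≤ Ck * ENNReal.ofReal (1 / (1 - s1)) * 1 := by
          refine mul_le_mul_right ?_ _
          rw [← hB]
          exact norm_layer volume H hH hr.le
      _ = Ck * ENNReal.ofReal (1 / (1 - s1)) := mul_one _
  -- second region
  have hP2 : (∫⁻ b in Set.Ioi (0:ℝ), ∫⁻ a in Set.Ioi (0:ℝ), Yf b a)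
      ≤ Ck * ENNReal.ofReal (1 / (1 - s2)) := by
    have hswap : (∫⁻ b in Set.Ioi (0:ℝ), ∫⁻ a in Set.Ioi (0:ℝ), Yf b a)
        = ∫⁻ a in Set.Ioi (0:ℝ), ∫⁻ b in Set.Ioi (0:ℝ), Yf b a :=
      lintegral_lintegral_swap hYm.aemeasurable
    rw [hswap]
    have inner : ∀ a ∈ Set.Ioi (0:ℝ), (∫⁻ b in Set.Ioi (0:ℝ), Yf b a)
        ≤ Ck * ENNReal.ofReal (1 / (1 - s2)) * (u a * ENNReal.ofReal (a ^ (t - 1))) := by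
      intro a ha
      rw [Set.mem_Ioi] at ha
      have hpt : ∀ b ∈ Set.Ioi (0:ℝ), Yf b a ≤
          (Set.Ioc (0:ℝ) (a ^ (t/r))).indicator
            (fun b => (Ck * u a) * ENNReal.ofReal (b ^ (-s2))) b := by
        intro b hb
        rw [Set.mem_Ioi] at hb
        simp only [hYf]
        by_cases hc : a ^ t ≤ b ^ r
        · rw [if_pos hc]; exact zero_le
        · push_neg at hc
          have hmem : b ∈ Set.Ioc (0:ℝ) (a ^ (t/r)) := by
            refine ⟨hb, ?_⟩
            have h2 : (b ^ r) ^ (1/r) ≤ (a ^ t) ^ (1/r) :=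
              Real.rpow_le_rpow (Real.rpow_nonneg hb.le _) hc.le (by positivity)
            rwa [← Real.rpow_mul hb.le, ← Real.rpow_mul ha.le, mul_one_div,
              div_self hr0.ne', Real.rpow_one, mul_one_div] at h2
          rw [if_neg (not_le.mpr hc), Set.indicator_of_mem hmem]
          exact le_of_eq (mul_assoc _ _ _).symm
      calc (∫⁻ b in Set.Ioi (0:ℝ), Yf b a)
          ≤ ∫⁻ b in Set.Ioi (0:ℝ), (Set.Ioc (0:ℝ) (a ^ (t/r))).indicator
              (fun b => (Ck * u a) * ENNReal.ofReal (b ^ (-s2))) b :=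
            setLIntegral_mono' measurableSet_Ioi hpt
        _ = ∫⁻ b in Set.Ioc (0:ℝ) (a ^ (t/r)), (Ck * u a) * ENNReal.ofReal (b ^ (-s2)) := by
            rw [lintegral_indicator measurableSet_Ioc,
              Measure.restrict_restrict measurableSet_Ioc,
              Set.inter_eq_left.mpr (fun b hb => hb.1)]
        _ = (Ck * u a) * ∫⁻ b in Set.Ioc (0:ℝ) (a ^ (t/r)), ENNReal.ofReal (b ^ (-s2)) :=
            lintegral_const_mul _ (by fun_prop)
        _ = (Ck * u a) * ENNReal.ofReal ((a ^ (t/r)) ^ (1 - s2) / (1 - s2)) := by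
            rw [lint_Ioc_rpow hs2pos' (by linarith) (Real.rpow_pos_of_pos ha _)]
        _ = Ck * ENNReal.ofReal (1 / (1 - s2)) * (u a * ENNReal.ofReal (a ^ (t - 1))) := by
            rw [← Real.rpow_mul ha.le, he2, div_eq_mul_one_div,
              ENNReal.ofReal_mul (Real.rpow_nonneg ha.le _)]
            ring
    calc (∫⁻ a in Set.Ioi (0:ℝ), ∫⁻ b in Set.Ioi (0:ℝ), Yf b a)
        ≤ ∫⁻ a in Set.Ioi (0:ℝ),
            Ck * ENNReal.ofReal (1 / (1 - s2)) * (u a * ENNReal.ofReal (a ^ (t - 1))) :=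
          setLIntegral_mono' measurableSet_Ioi inner
      _ = Ck * ENNReal.ofReal (1 / (1 - s2)) *
            ∫⁻ a in Set.Ioi (0:ℝ), u a * ENNReal.ofReal (a ^ (t - 1)) :=
          lintegral_const_mul _ (hum.mul (by fun_prop))
      _ ≤ Ck * ENNReal.ofReal (1 / (1 - s2)) * 1 := by
          refine mul_le_mul_right ?_ _
          rw [← hA]
          exact norm_layer volume F hF ht.le
      _ = Ck * ENNReal.ofReal (1 / (1 - s2)) := mul_one _
  -- assemble
  calc ∫⁻ x, ∫⁻ y, (F x : ℝ≥0∞) * ENNReal.ofReal (‖x - y‖ ^ (-lam)) * (H y : ℝ≥0∞)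
      = ∫⁻ b in Set.Ioi (0:ℝ), ∫⁻ a in Set.Ioi (0:ℝ),
          ∫⁻ x in {x | ENNReal.ofReal a < (F x : ℝ≥0∞)}, Φ (x, b) := step2
    _ ≤ ∫⁻ b in Set.Ioi (0:ℝ),
          ((∫⁻ a in Set.Ioi (0:ℝ), Xf b a) + ∫⁻ a in Set.Ioi (0:ℝ), Yf b a) := by
        refine setLIntegral_mono' measurableSet_Ioi fun b hb => ?_
        calc (∫⁻ a in Set.Ioi (0:ℝ),
              ∫⁻ x in {x | ENNReal.ofReal a < (F x : ℝ≥0∞)}, Φ (x, b))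
            ≤ ∫⁻ a in Set.Ioi (0:ℝ), (Xf b a + Yf b a) :=
              setLIntegral_mono' measurableSet_Ioi (hT_le b hb)
          _ = _ := lintegral_add_left (hXm.comp (measurable_const.prodMk measurable_id)) _
    _ = (∫⁻ b in Set.Ioi (0:ℝ), ∫⁻ a in Set.Ioi (0:ℝ), Xf b a)
        + ∫⁻ b in Set.Ioi (0:ℝ), ∫⁻ a in Set.Ioi (0:ℝ), Yf b a :=
        lintegral_add_left hXm.lintegral_prod_right' _
    _ ≤ Ck * ENNReal.ofReal (1 / (1 - s1)) + Ck * ENNReal.ofReal (1 / (1 - s2)) :=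
        add_le_add hP1 hP2
    _ = Ck * (ENNReal.ofReal (1 / (1 - s1)) + ENNReal.ofReal (1 / (1 - s2))) := by
        rw [mul_add]


/-- Hardy-Littlewood-Sobolev for nonnegative measurable functions, general norms. -/
lemma core_gen (hN : 1 ≤ N) (ht : 1 < t) (hr : 1 < r) (hlam0 : 0 < lam) (hlamN : lam < N)
    (hsum : 1 / t + lam / N + 1 / r = 2)
    (F H : EuclideanSpace ℝ (Fin N) → ℝ≥0) (hF : Measurable F) (hH : Measurable H) :
    ∫⁻ x, ∫⁻ y, (F x : ℝ≥0∞) * ENNReal.ofReal (‖x - y‖ ^ (-lam)) * (H y : ℝ≥0∞)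
      ≤ ((volume (ball (0 : EuclideanSpace ℝ (Fin N)) 1) ^ (lam / N) *
          ENNReal.ofReal ((N:ℝ) / ((N:ℝ) - lam))) *
        (ENNReal.ofReal (1 / (1 - t * (1 - lam / N))) +
          ENNReal.ofReal (1 / (1 - r * (1 - lam / N)))))
        * (∫⁻ x, (F x : ℝ≥0∞) ^ t) ^ (1/t) * (∫⁻ y, (H y : ℝ≥0∞) ^ r) ^ (1/r) := by
  have hNR : (0:ℝ) < N := by exact_mod_cast Nat.lt_of_lt_of_le Nat.zero_lt_one hN
  have ht0 : (0:ℝ) < t := by linarith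
  have hr0 : (0:ℝ) < r := by linarith
  set C0 : ℝ≥0∞ := (volume (ball (0 : EuclideanSpace ℝ (Fin N)) 1) ^ (lam / N) *
          ENNReal.ofReal ((N:ℝ) / ((N:ℝ) - lam))) *
        (ENNReal.ofReal (1 / (1 - t * (1 - lam / N))) +
          ENNReal.ofReal (1 / (1 - r * (1 - lam / N)))) with hC0
  set A : ℝ≥0∞ := ∫⁻ x, (F x : ℝ≥0∞) ^ t with hA
  set B : ℝ≥0∞ := ∫⁻ y, (H y : ℝ≥0∞) ^ r with hB
  have hC00 : C0 ≠ 0 := by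
    rw [hC0]
    refine mul_ne_zero (mul_ne_zero ?_ ?_) ?_
    · exact (ENNReal.rpow_pos (measure_ball_pos _ _ one_pos) measure_ball_lt_top.ne).ne'
    · simp only [ne_eq, ENNReal.ofReal_eq_zero, not_le]
      exact div_pos hNR (by linarith)
    · intro hcon
      rw [add_eq_zero] at hcon
      have h1 := hcon.1
      rw [ENNReal.ofReal_eq_zero] at h1
      have hs1lt : 0 < 1 - t * (1 - lam / N) := by
        have hLv : lam / (N:ℝ) = 2 - 1/t - 1/r := by linarith
        have : 1 - t * (1 - lam / N) = t * (1 - 1/r) := by rw [hLv]; field_simp; ring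
        rw [this]
        have : 1 / r < 1 := by rw [div_lt_one hr0]; linarith
        exact mul_pos ht0 (by linarith)
      have : (0:ℝ) < 1 / (1 - t * (1 - lam / N)) := by positivity
      linarith
  -- degenerate cases
  rcases eq_or_ne A 0 with hA0 | hA0
  · have hFz : ∀ᵐ x ∂(volume : Measure (EuclideanSpace ℝ (Fin N))), (F x : ℝ≥0∞) = 0 := by
      have := (lintegral_eq_zero_iff (by fun_prop :
        Measurable fun x => ((F x : ℝ≥0∞)) ^ t)).mp hA0
      filter_upwards [this] with x hx
      have hx' : ((F x : ℝ≥0∞)) ^ t = 0 := hx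
      rcases ENNReal.rpow_eq_zero_iff.mp hx' with h | h
      · exact h.1
      · exact absurd h.2 (by linarith)
    have : (∫⁻ x, ∫⁻ y, (F x : ℝ≥0∞) * ENNReal.ofReal (‖x - y‖ ^ (-lam)) * (H y : ℝ≥0∞)) = 0 := by
      rw [lintegral_eq_zero_iff' ?_]
      · filter_upwards [hFz] with x hx
        simp [hx]
      · refine Measurable.aemeasurable ?_
        refine Measurable.lintegral_prod_right' (f := fun p :
          EuclideanSpace ℝ (Fin N) × EuclideanSpace ℝ (Fin N) =>
          (F p.1 : ℝ≥0∞) * ENNReal.ofReal (‖p.1 - p.2‖ ^ (-lam)) * (H p.2 : ℝ≥0∞)) ?_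
        fun_prop
    rw [this]
    exact zero_le
  rcases eq_or_ne B 0 with hB0 | hB0
  · have hHz : ∀ᵐ y ∂(volume : Measure (EuclideanSpace ℝ (Fin N))), (H y : ℝ≥0∞) = 0 := by
      have := (lintegral_eq_zero_iff (by fun_prop :
        Measurable fun y => ((H y : ℝ≥0∞)) ^ r)).mp hB0
      filter_upwards [this] with y hy
      have hy' : ((H y : ℝ≥0∞)) ^ r = 0 := hy
      rcases ENNReal.rpow_eq_zero_iff.mp hy' with h | h
      · exact h.1
      · exact absurd h.2 (by linarith)
    have : (∫⁻ x, ∫⁻ y, (F x : ℝ≥0∞) * ENNReal.ofReal (‖x - y‖ ^ (-lam)) * (H y : ℝ≥0∞)) = 0 := by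
      have hinner : ∀ x, (∫⁻ y, (F x : ℝ≥0∞) * ENNReal.ofReal (‖x - y‖ ^ (-lam)) * (H y : ℝ≥0∞)) = 0 := by
        intro x
        rw [lintegral_eq_zero_iff' (by fun_prop)]
        filter_upwards [hHz] with y hy
        simp [hy]
      simp [hinner]
    rw [this]
    exact zero_le
  rcases eq_or_ne A ⊤ with hAt | hAt
  · have h1 : A ^ (1/t) = ⊤ := by rw [hAt]; exact ENNReal.top_rpow_of_pos (by positivity)
    have h2 : B ^ (1/r) ≠ 0 := by
      simp only [ne_eq, ENNReal.rpow_eq_zero_iff, not_or, not_and_or]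
      exact ⟨Or.inl hB0, Or.inr (not_lt.mpr (by positivity))⟩
    have : C0 * A ^ (1/t) * B ^ (1/r) = ⊤ := by
      rw [h1, ENNReal.mul_top hC00, ENNReal.top_mul h2]
    exact le_of_le_of_eq le_top this.symm
  rcases eq_or_ne B ⊤ with hBt | hBt
  · have h1 : B ^ (1/r) = ⊤ := by rw [hBt]; exact ENNReal.top_rpow_of_pos (by positivity)
    have h2 : A ^ (1/t) ≠ 0 := by
      simp only [ne_eq, ENNReal.rpow_eq_zero_iff, not_or, not_and_or]
      exact ⟨Or.inl hA0, Or.inr (not_lt.mpr (by positivity))⟩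
    have : C0 * A ^ (1/t) * B ^ (1/r) = ⊤ := by
      rw [h1, ENNReal.mul_top (mul_ne_zero hC00 h2)]
    exact le_of_le_of_eq le_top this.symm
  -- main case: normalize
  have hAp : A ^ (1/t) ≠ 0 := by
    simp only [ne_eq, ENNReal.rpow_eq_zero_iff, not_or, not_and_or]
    exact ⟨Or.inl hA0, Or.inl hAt⟩
  have hApt : A ^ (1/t) ≠ ⊤ := ENNReal.rpow_ne_top_of_nonneg (by positivity) hAt
  have hBp : B ^ (1/r) ≠ 0 := by
    simp only [ne_eq, ENNReal.rpow_eq_zero_iff, not_or, not_and_or]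
    exact ⟨Or.inl hB0, Or.inl hBt⟩
  have hBpt : B ^ (1/r) ≠ ⊤ := ENNReal.rpow_ne_top_of_nonneg (by positivity) hBt
  set c : ℝ≥0∞ := (A ^ (1/t))⁻¹ with hc
  set d : ℝ≥0∞ := (B ^ (1/r))⁻¹ with hd
  have hc0 : c ≠ 0 := by rw [hc]; exact ENNReal.inv_ne_zero.mpr hApt
  have hct : c ≠ ⊤ := by rw [hc]; exact ENNReal.inv_ne_top.mpr hAp
  have hd0 : d ≠ 0 := by rw [hd]; exact ENNReal.inv_ne_zero.mpr hBpt
  have hdt : d ≠ ⊤ := by rw [hd]; exact ENNReal.inv_ne_top.mpr hBp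
  set F' : EuclideanSpace ℝ (Fin N) → ℝ≥0 := fun x => c.toNNReal * F x with hF'
  set H' : EuclideanSpace ℝ (Fin N) → ℝ≥0 := fun y => d.toNNReal * H y with hH'
  have hcF : ∀ x, (F' x : ℝ≥0∞) = c * (F x : ℝ≥0∞) := by
    intro x
    rw [hF']
    push_cast
    rw [ENNReal.coe_toNNReal hct]
  have hdH : ∀ y, (H' y : ℝ≥0∞) = d * (H y : ℝ≥0∞) := by
    intro y
    rw [hH']
    push_cast
    rw [ENNReal.coe_toNNReal hdt]
  have hA1 : ∫⁻ x, (F' x : ℝ≥0∞) ^ t = 1 := by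
    have : ∀ x, (F' x : ℝ≥0∞) ^ t = c ^ t * (F x : ℝ≥0∞) ^ t := by
      intro x
      rw [hcF, ENNReal.mul_rpow_of_nonneg _ _ ht0.le]
    simp_rw [this]
    rw [lintegral_const_mul _ (by fun_prop), ← hA, hc, ENNReal.inv_rpow,
      ← ENNReal.rpow_mul, one_div, inv_mul_cancel₀ ht0.ne', ENNReal.rpow_one]
    exact ENNReal.inv_mul_cancel hA0 hAt
  have hB1 : ∫⁻ y, (H' y : ℝ≥0∞) ^ r = 1 := by
    have : ∀ y, (H' y : ℝ≥0∞) ^ r = d ^ r * (H y : ℝ≥0∞) ^ r := by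
      intro y
      rw [hdH, ENNReal.mul_rpow_of_nonneg _ _ hr0.le]
    simp_rw [this]
    rw [lintegral_const_mul _ (by fun_prop), ← hB, hd, ENNReal.inv_rpow,
      ← ENNReal.rpow_mul, one_div, inv_mul_cancel₀ hr0.ne', ENNReal.rpow_one]
    exact ENNReal.inv_mul_cancel hB0 hBt
  have hkey := core_norm hN ht hr hlam0 hlamN hsum F' H'
    (hF.const_mul _) (hH.const_mul _) hA1 hB1
  have hLHS : ∫⁻ x, ∫⁻ y, (F' x : ℝ≥0∞) * ENNReal.ofReal (‖x - y‖ ^ (-lam)) * (H' y : ℝ≥0∞)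
      = (c * d) * ∫⁻ x, ∫⁻ y, (F x : ℝ≥0∞) * ENNReal.ofReal (‖x - y‖ ^ (-lam)) * (H y : ℝ≥0∞) := by
    have hin : ∀ x, (∫⁻ y, (F' x : ℝ≥0∞) * ENNReal.ofReal (‖x - y‖ ^ (-lam)) * (H' y : ℝ≥0∞))
        = (c * d) * ∫⁻ y, (F x : ℝ≥0∞) * ENNReal.ofReal (‖x - y‖ ^ (-lam)) * (H y : ℝ≥0∞) := by
      intro x
      rw [← lintegral_const_mul _ (by fun_prop)]
      refine lintegral_congr fun y => ?_
      rw [hcF, hdH]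
      ring
    simp_rw [hin]
    rw [lintegral_const_mul _ ?_]
    refine Measurable.lintegral_prod_right' (f := fun p :
      EuclideanSpace ℝ (Fin N) × EuclideanSpace ℝ (Fin N) =>
      (F p.1 : ℝ≥0∞) * ENNReal.ofReal (‖p.1 - p.2‖ ^ (-lam)) * (H p.2 : ℝ≥0∞)) (by fun_prop)
  rw [hLHS] at hkey
  have hcd0 : c * d ≠ 0 := mul_ne_zero hc0 hd0
  have hcdt : c * d ≠ ⊤ := ENNReal.mul_ne_top hct hdt
  have final : ∫⁻ x, ∫⁻ y, (F x : ℝ≥0∞) * ENNReal.ofReal (‖x - y‖ ^ (-lam)) * (H y : ℝ≥0∞)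
      ≤ C0 / (c * d) := by
    rw [ENNReal.le_div_iff_mul_le (Or.inl hcd0) (Or.inl hcdt), mul_comm]
    exact hkey
  refine le_trans final (le_of_eq ?_)
  rw [ENNReal.div_eq_inv_mul, ENNReal.mul_inv (Or.inl hc0) (Or.inl hct), hc, hd,
    inv_inv, inv_inv]
  ring

end P4

end HLSAux

open HLSAux in
open MeasureTheory Set Metric in
open scoped ENNReal NNReal in
/-- **Classical Hardy–Littlewood–Sobolev inequality.**
Let `N ≥ 1`, `t, r > 1` and `0 < lam < N` with `1/t + lam/N + 1/r = 2`. Then there is a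
constant `C > 0` such that for all `f ∈ L^t(ℝ^N)` and `h ∈ L^r(ℝ^N)`,
`|∬ f(x) h(y) / |x - y|^lam| ≤ C ‖f‖_t ‖h‖_r`. -/
theorem hardy_littlewood_sobolev (N : ℕ) (hN : 1 ≤ N) (t r lam : ℝ)
    (ht : 1 < t) (hr : 1 < r) (hlam0 : 0 < lam) (hlamN : lam < N)
    (hsum : 1 / t + lam / N + 1 / r = 2) :
    ∃ C > 0, ∀ f h : EuclideanSpace ℝ (Fin N) → ℝ,
      MemLp f (ENNReal.ofReal t) volume → MemLp h (ENNReal.ofReal r) volume →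
      |∫ x, ∫ y, f x * h y / ‖x - y‖ ^ lam| ≤
        C * (eLpNorm f (ENNReal.ofReal t) volume).toReal *
          (eLpNorm h (ENNReal.ofReal r) volume).toReal := by
  have hNR : (0:ℝ) < N := by exact_mod_cast Nat.lt_of_lt_of_le Nat.zero_lt_one hN
  have ht0 : (0:ℝ) < t := by linarith
  have hr0 : (0:ℝ) < r := by linarith
  set C0 : ℝ≥0∞ := (volume (ball (0 : EuclideanSpace ℝ (Fin N)) 1) ^ (lam / N) *
        ENNReal.ofReal ((N:ℝ) / ((N:ℝ) - lam))) *
      (ENNReal.ofReal (1 / (1 - t * (1 - lam / N))) +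
        ENNReal.ofReal (1 / (1 - r * (1 - lam / N)))) with hC0
  have hC0t : C0 ≠ ⊤ := by
    rw [hC0]
    refine ENNReal.mul_ne_top (ENNReal.mul_ne_top ?_ ENNReal.ofReal_ne_top) ?_
    · exact ENNReal.rpow_ne_top_of_nonneg (div_nonneg hlam0.le hNR.le) measure_ball_lt_top.ne
    · exact ENNReal.add_ne_top.mpr ⟨ENNReal.ofReal_ne_top, ENNReal.ofReal_ne_top⟩
  refine ⟨C0.toReal + 1, by positivity, ?_⟩
  intro f h hf hh
  set f' := hf.1.mk f with hf'def
  set h' := hh.1.mk h with hh'def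
  have hff' : f =ᵐ[volume] f' := hf.1.ae_eq_mk
  have hhh' : h =ᵐ[volume] h' := hh.1.ae_eq_mk
  set F : EuclideanSpace ℝ (Fin N) → ℝ≥0 := fun x => ‖f' x‖₊ with hFdef
  set H : EuclideanSpace ℝ (Fin N) → ℝ≥0 := fun y => ‖h' y‖₊ with hHdef
  have hFm : Measurable F := hf.1.stronglyMeasurable_mk.measurable.nnnorm
  have hHm : Measurable H := hh.1.stronglyMeasurable_mk.measurable.nnnorm
  have htE0 : ENNReal.ofReal t ≠ 0 := by
    simp only [ne_eq, ENNReal.ofReal_eq_zero, not_le]; exact ht0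
  have hrE0 : ENNReal.ofReal r ≠ 0 := by
    simp only [ne_eq, ENNReal.ofReal_eq_zero, not_le]; exact hr0
  set A : ℝ≥0∞ := ∫⁻ x, (F x : ℝ≥0∞) ^ t with hA
  set B : ℝ≥0∞ := ∫⁻ y, (H y : ℝ≥0∞) ^ r with hB
  have hsnf : eLpNorm f (ENNReal.ofReal t) volume = A ^ (1/t) := by
    rw [eLpNorm_eq_lintegral_rpow_enorm_toReal htE0 ENNReal.ofReal_ne_top,
      ENNReal.toReal_ofReal ht0.le, hA]
    congr 1
    refine lintegral_congr_ae ?_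
    filter_upwards [hff'] with x hx
    rw [hFdef, hx]; rfl
  have hsnh : eLpNorm h (ENNReal.ofReal r) volume = B ^ (1/r) := by
    rw [eLpNorm_eq_lintegral_rpow_enorm_toReal hrE0 ENNReal.ofReal_ne_top,
      ENNReal.toReal_ofReal hr0.le, hB]
    congr 1
    refine lintegral_congr_ae ?_
    filter_upwards [hhh'] with y hy
    rw [hHdef, hy]; rfl
  set D : ℝ≥0∞ := C0 * A ^ (1/t) * B ^ (1/r) with hD
  have hDt : D ≠ ⊤ := by
    rw [hD]
    refine ENNReal.mul_ne_top (ENNReal.mul_ne_top hC0t ?_) ?_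
    · rw [← hsnf]; exact hf.eLpNorm_ne_top
    · rw [← hsnh]; exact hh.eLpNorm_ne_top
  -- pointwise bound
  have hpt : ∀ x y : EuclideanSpace ℝ (Fin N),
      (‖f x * h y / ‖x - y‖ ^ lam‖₊ : ℝ≥0∞) ≤
        (‖f x‖₊ : ℝ≥0∞) * ENNReal.ofReal (‖x - y‖ ^ (-lam)) * (‖h y‖₊ : ℝ≥0∞) := by
    intro x y
    rcases eq_or_lt_of_le (norm_nonneg (x - y)) with h0 | h0
    · have e : f x * h y / ‖x - y‖ ^ lam = 0 := by
        rw [← h0, Real.zero_rpow hlam0.ne', div_zero]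
      rw [e]
      simp
    · have hpow : 0 < ‖x - y‖ ^ lam := Real.rpow_pos_of_pos h0 _
      rw [← enorm_eq_nnnorm, ← ofReal_norm, ← enorm_eq_nnnorm, ← ofReal_norm,
        ← enorm_eq_nnnorm, ← ofReal_norm, ← ENNReal.ofReal_mul (norm_nonneg _),
        ← ENNReal.ofReal_mul (mul_nonneg (norm_nonneg _) (Real.rpow_nonneg (norm_nonneg _) _))]
      refine ENNReal.ofReal_le_ofReal (le_of_eq ?_)
      rw [norm_div, norm_mul, Real.norm_eq_abs (‖x - y‖ ^ lam), abs_of_pos hpow,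
        Real.rpow_neg (norm_nonneg _)]
      ring
  -- main chain in ℝ≥0∞
  have big : (‖∫ x, ∫ y, f x * h y / ‖x - y‖ ^ lam‖₊ : ℝ≥0∞) ≤ D := by
    calc (‖∫ x, ∫ y, f x * h y / ‖x - y‖ ^ lam‖₊ : ℝ≥0∞)
        ≤ ∫⁻ x, (‖∫ y, f x * h y / ‖x - y‖ ^ lam‖₊ : ℝ≥0∞) :=
          enorm_integral_le_lintegral_enorm _
      _ ≤ ∫⁻ x, ∫⁻ y, (‖f x * h y / ‖x - y‖ ^ lam‖₊ : ℝ≥0∞) :=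
          lintegral_mono fun x => enorm_integral_le_lintegral_enorm _
      _ ≤ ∫⁻ x, ∫⁻ y,
            (‖f x‖₊ : ℝ≥0∞) * ENNReal.ofReal (‖x - y‖ ^ (-lam)) * (‖h y‖₊ : ℝ≥0∞) :=
          lintegral_mono fun x => lintegral_mono fun y => hpt x y
      _ = ∫⁻ x, ∫⁻ y,
            (F x : ℝ≥0∞) * ENNReal.ofReal (‖x - y‖ ^ (-lam)) * (H y : ℝ≥0∞) := by
          refine lintegral_congr_ae ?_
          filter_upwards [hff'] with x hx
          refine lintegral_congr_ae ?_
          filter_upwards [hhh'] with y hy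
          rw [hFdef, hHdef, hx, hy]
      _ ≤ D := by
          rw [hD, hC0, hA, hB]
          exact core_gen hN ht hr hlam0 hlamN hsum F H hFm hHm
  calc |∫ x, ∫ y, f x * h y / ‖x - y‖ ^ lam|
      = ((‖∫ x, ∫ y, f x * h y / ‖x - y‖ ^ lam‖₊ : ℝ≥0∞)).toReal := by
        simp [Real.norm_eq_abs]
    _ ≤ D.toReal := ENNReal.toReal_mono hDt big
    _ = C0.toReal * (eLpNorm f (ENNReal.ofReal t) volume).toReal *
          (eLpNorm h (ENNReal.ofReal r) volume).toReal := by
        rw [hD, hsnf, hsnh, ENNReal.toReal_mul, ENNReal.toReal_mul]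
    _ ≤ (C0.toReal + 1) * (eLpNorm f (ENNReal.ofReal t) volume).toReal *
          (eLpNorm h (ENNReal.ofReal r) volume).toReal := by
        gcongr
        linarith
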